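/- Let p be a prime, k ≥ 1, W a finite-dimensional vector space over Z_p, and G : W^k → Z_p a k-linear form. Suppose M is a basis of W such that the restriction of G to M^k is totally symmetric (i.e., G(m₁,...,m_k) depends only on the set {m₁,...,m_k}). Then for every sufficiently large N there exists a linear map r : W → Z_p^N such that for all w₁,...,w_k ∈ W, G(w₁,...,w_k) = w(r(w₁) ⊙ r(w₂) ⊙ ⋯ ⊙ r(w_k)), where w denotes the coordinate sum and ⊙ the coordinatewise product. -/

import Mathlib

open Finset in
/-- Auxiliary: totally symmetric multilinear forms on a basis are sums of
`c S * [range ⊆ S]` with Möbius coefficients. -/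
theorem stmt6_aux {p k : ℕ} [Fact p.Prime] (hk : 1 ≤ k)
    {W : Type} [AddCommGroup W] [Module (ZMod p) W]
    (G : MultilinearMap (ZMod p) (fun _ : Fin k => W) (ZMod p))
    {ι : Type} [Fintype ι] [DecidableEq ι] (B : Module.Basis ι (ZMod p) W)
    (hsym : ∀ m m' : Fin k → ι, Set.range m = Set.range m' →
      G (fun j => B (m j)) = G (fun j => B (m' j))) :
    ∃ lam : Finset ι × Fin p → (W →ₗ[ZMod p] ZMod p),
      ∀ w : Fin k → W, G w = ∑ a : Finset ι × Fin p, ∏ j, lam a (w j) := by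
  classical
  -- representative tuples
  have hrep : ∀ T : Finset ι, T.Nonempty → T.card ≤ k →
      ∃ m : Fin k → ι, Set.range m = ↑T := by
    intro T h1 h2
    haveI : Nonempty ↥T := h1.to_subtype
    obtain ⟨f⟩ : Nonempty (↥T ↪ Fin k) :=
      Function.Embedding.nonempty_of_card_le (by simpa using h2)
    refine ⟨fun j => ↑(Function.invFun f j), ?_⟩
    ext x
    constructor
    · rintro ⟨j, rfl⟩; exact (Function.invFun f j).2
    · intro hx
      exact ⟨f ⟨x, hx⟩,
        congrArg Subtype.val (Function.leftInverse_invFun f.injective ⟨x, hx⟩)⟩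
  set gt : Finset ι → ZMod p := fun T =>
    if h : T.Nonempty ∧ T.card ≤ k then
      G (fun j => B ((hrep T h.1 h.2).choose j)) else 0 with hgt
  have hGbasis : ∀ m : Fin k → ι,
      G (fun j => B (m j)) = gt (Finset.image m Finset.univ) := by
    intro m
    have h1 : (Finset.image m Finset.univ).Nonempty :=
      ⟨m ⟨0, hk⟩, Finset.mem_image_of_mem m (Finset.mem_univ _)⟩
    have h2 : (Finset.image m Finset.univ).card ≤ k :=
      le_trans Finset.card_image_le (by simp)
    rw [hgt]
    simp only [dif_pos (And.intro h1 h2)]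
    apply hsym
    rw [(hrep _ h1 h2).choose_spec]
    ext x
    simp [eq_comm]
  -- Möbius coefficients
  set c : Finset ι → ZMod p := fun S =>
    ∑ S' ∈ Finset.univ.filter (fun S' => S ⊆ S'),
      (-1 : ZMod p) ^ (S.card + S'.card) * gt S' with hc
  -- inner sum
  have key : ∀ T S' : Finset ι,
      (∑ S ∈ Finset.univ.filter (fun S => T ⊆ S ∧ S ⊆ S'),
        (-1 : ZMod p) ^ (S.card + S'.card)) = if T = S' then 1 else 0 := by
    intro T S'
    by_cases hTS : T ⊆ S'
    · have hinj : ∀ U ∈ (S' \ T).powerset, ∀ V ∈ (S' \ T).powerset,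
          T ∪ U = T ∪ V → U = V := by
        intro U hU V hV hUV
        have h1 := Finset.mem_powerset.mp hU
        have h2 := Finset.mem_powerset.mp hV
        ext a
        constructor
        · intro ha
          have : a ∈ T ∪ V := hUV ▸ (Finset.mem_union_right T ha)
          rcases Finset.mem_union.mp this with h | h
          · exact absurd h (Finset.mem_sdiff.mp (h1 ha)).2
          · exact h
        · intro ha
          have : a ∈ T ∪ U := hUV.symm ▸ (Finset.mem_union_right T ha)
          rcases Finset.mem_union.mp this with h | h
          · exact absurd h (Finset.mem_sdiff.mp (h2 ha)).2
          · exact h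
      have himg : Finset.univ.filter (fun S => T ⊆ S ∧ S ⊆ S')
          = (S' \ T).powerset.image (fun U => T ∪ U) := by
        ext S
        simp only [Finset.mem_filter, Finset.mem_univ, true_and, Finset.mem_image,
          Finset.mem_powerset]
        constructor
        · rintro ⟨h1, h2⟩
          exact ⟨S \ T, Finset.sdiff_subset_sdiff h2 le_rfl,
            by rw [Finset.union_sdiff_of_subset h1]⟩
        · rintro ⟨U, hU, rfl⟩
          exact ⟨Finset.subset_union_left, Finset.union_subset hTS
            (le_trans hU Finset.sdiff_subset)⟩
      rw [himg, Finset.sum_image hinj]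
      have hcard : ∀ U ∈ (S' \ T).powerset, ((T ∪ U).card : ℕ) = T.card + U.card := by
        intro U hU
        rw [Finset.card_union_of_disjoint]
        exact Finset.disjoint_left.mpr
          (fun a ha hU' => (Finset.mem_sdiff.mp
            (Finset.mem_powerset.mp hU hU')).2 ha)
      calc (∑ U ∈ (S' \ T).powerset, (-1 : ZMod p) ^ ((T ∪ U).card + S'.card))
          = ∑ U ∈ (S' \ T).powerset,
              (-1 : ZMod p) ^ (T.card + S'.card) * (-1 : ZMod p) ^ U.card := by
            apply Finset.sum_congr rfl
            intro U hU
            rw [hcard U hU, pow_add, pow_add, pow_add]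
            ring
        _ = (-1 : ZMod p) ^ (T.card + S'.card)
              * ∑ U ∈ (S' \ T).powerset, (-1 : ZMod p) ^ U.card := by
            rw [Finset.mul_sum]
        _ = if T = S' then 1 else 0 := by
            have : (∑ U ∈ (S' \ T).powerset, (-1 : ZMod p) ^ U.card)
                = if S' \ T = ∅ then 1 else 0 := by
              have := Finset.sum_powerset_neg_one_pow_card (x := S' \ T)
              have h2 := congrArg (fun z : ℤ => (z : ZMod p)) this
              push_cast at h2
              simpa using h2
            rw [this]
            by_cases hE : S' \ T = ∅
            · have hST : S' = T :=
                le_antisymm (Finset.sdiff_eq_empty_iff_subset.mp hE) hTS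
              rw [if_pos hE, if_pos hST.symm, hST, mul_one, ← two_mul,
                pow_mul]
              norm_num
            · have hne : T ≠ S' := by
                intro h; exact hE (by rw [h, Finset.sdiff_self])
              rw [if_neg hE, if_neg hne, mul_zero]
    · have hempty : Finset.univ.filter (fun S => T ⊆ S ∧ S ⊆ S') = ∅ := by
        ext S
        simp only [Finset.mem_filter, Finset.mem_univ, true_and, Finset.notMem_empty,
          iff_false]
        rintro ⟨h1, h2⟩
        exact hTS (le_trans h1 h2)
      rw [hempty, Finset.sum_empty, if_neg (fun h => hTS (le_of_eq h))]
  -- Möbius inversion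
  have hmob : ∀ T : Finset ι,
      (∑ S ∈ Finset.univ.filter (fun S => T ⊆ S), c S) = gt T := by
    intro T
    have step1 : (∑ S ∈ Finset.univ.filter (fun S => T ⊆ S), c S)
        = ∑ S : Finset ι, ∑ S' : Finset ι,
            (if T ⊆ S ∧ S ⊆ S' then (-1 : ZMod p) ^ (S.card + S'.card) * gt S' else 0) := by
      rw [hc, Finset.sum_filter]
      apply Finset.sum_congr rfl
      intro S _
      by_cases h : T ⊆ S
      · simp [h, Finset.sum_filter]
      · simp [h]
    have step2 : ∀ S' : Finset ι,
        (∑ S : Finset ι,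
            if T ⊆ S ∧ S ⊆ S' then (-1 : ZMod p) ^ (S.card + S'.card) * gt S' else 0)
          = (if T = S' then 1 else 0) * gt S' := by
      intro S'
      rw [← key T S', Finset.sum_mul, Finset.sum_filter]
    rw [step1, Finset.sum_comm]
    rw [Finset.sum_congr rfl (fun S' _ => step2 S')]
    simp
  -- the linear forms
  have hlam : ∀ (S : Finset ι) (i : ι),
      (∑ j ∈ S, B.coord j) (B i) = if i ∈ S then 1 else 0 := by
    intro S i
    rw [LinearMap.coe_sum, Finset.sum_apply]
    have : ∀ j ∈ S, B.coord j (B i) = if i = j then 1 else 0 := by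
      intro j _
      rw [Module.Basis.coord_apply, Module.Basis.repr_self, Finsupp.single_apply]
    rw [Finset.sum_congr rfl this]
    simp [Finset.sum_ite_eq]
  set lam : Finset ι × Fin p → (W →ₗ[ZMod p] ZMod p) := fun a =>
    if ((a.2 : ℕ) < (c a.1).val) then (∑ i ∈ a.1, B.coord i) else 0 with hlamdef
  refine ⟨lam, ?_⟩
  -- build the multilinear map for the RHS and use basis extensionality
  set H : MultilinearMap (ZMod p) (fun _ : Fin k => W) (ZMod p) :=
    ∑ a : Finset ι × Fin p,
      (MultilinearMap.mkPiAlgebra (ZMod p) (Fin k) (ZMod p)).compLinearMap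
        (fun _ => lam a) with hH
  have hHapp : ∀ w : Fin k → W, H w = ∑ a : Finset ι × Fin p, ∏ j, lam a (w j) := by
    intro w
    rw [hH, MultilinearMap.sum_apply]
    apply Finset.sum_congr rfl
    intro a _
    simp [MultilinearMap.compLinearMap]
  have hGH : G = H := by
    apply Module.Basis.ext_multilinear (fun _ => B)
    intro m
    have hprod : ∀ a : Finset ι × Fin p,
        (∏ j, lam a (B (m j)))
          = if ((a.2 : ℕ) < (c a.1).val) then
              (if Finset.image m Finset.univ ⊆ a.1 then (1 : ZMod p) else 0) else 0 := by
      intro a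
      rw [hlamdef]
      by_cases h : ((a.2 : ℕ) < (c a.1).val)
      · simp only [if_pos h]
        by_cases hsub : Finset.image m Finset.univ ⊆ a.1
        · rw [if_pos hsub]
          apply Finset.prod_eq_one
          intro j _
          rw [hlam, if_pos (hsub (Finset.mem_image_of_mem m (Finset.mem_univ j)))]
        · rw [if_neg hsub]
          obtain ⟨x, hx1, hx2⟩ := Finset.not_subset.mp hsub
          obtain ⟨j, _, rfl⟩ := Finset.mem_image.mp hx1
          exact Finset.prod_eq_zero (Finset.mem_univ j) (by rw [hlam, if_neg hx2])
      · simp only [if_neg h]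
        exact Finset.prod_eq_zero (Finset.mem_univ ⟨0, hk⟩) rfl
    have hfin : ∀ (S : Finset ι) (x : ZMod p),
        (∑ t : Fin p, if ((t : ℕ) < (c S).val) then x else 0) = c S * x := by
      intro S x
      rw [Fin.sum_univ_eq_sum_range (fun t => if (t < (c S).val) then x else 0) p]
      have h1 : ∀ t ∈ Finset.range p, (if t < (c S).val then x else 0)
          = if t ∈ Finset.range ((c S).val) then x else 0 := by
        intro t _; simp [Finset.mem_range]
      rw [Finset.sum_congr rfl h1, Finset.sum_ite_mem,
        Finset.inter_eq_right.mpr (Finset.range_subset_range.mpr (le_of_lt (ZMod.val_lt (c S)))),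
        Finset.sum_const, Finset.card_range, nsmul_eq_mul, ZMod.natCast_val, ZMod.cast_id]
    have hmain : (∑ a : Finset ι × Fin p, ∏ j, lam a (B (m j)))
        = gt (Finset.image m Finset.univ) := by
      calc (∑ a : Finset ι × Fin p, ∏ j, lam a (B (m j)))
          = ∑ S : Finset ι, ∑ t : Fin p,
              (if ((t : ℕ) < (c S).val) then
                (if Finset.image m Finset.univ ⊆ S then (1 : ZMod p) else 0) else 0) := by
            rw [Finset.sum_congr rfl (fun a _ => hprod a), Fintype.sum_prod_type]
        _ = ∑ S : Finset ι,
              c S * (if Finset.image m Finset.univ ⊆ S then (1 : ZMod p) else 0) := by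
            exact Finset.sum_congr rfl (fun S _ => hfin S _)
        _ = ∑ S ∈ Finset.univ.filter (fun S => Finset.image m Finset.univ ⊆ S), c S := by
            rw [Finset.sum_filter]
            apply Finset.sum_congr rfl
            intro S _
            by_cases h : Finset.image m Finset.univ ⊆ S <;> simp [h]
        _ = gt (Finset.image m Finset.univ) := hmob _
    rw [hHapp, hGbasis]
    exact hmain.symm
  rw [hGH]
  exact fun w => hHapp w

theorem stmt6 (p : ℕ) (hp : p.Prime) (k : ℕ) (hk : 1 ≤ k)
    (W : Type) [AddCommGroup W] [Module (ZMod p) W] [Module.Finite (ZMod p) W]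
    (G : MultilinearMap (ZMod p) (fun _ : Fin k => W) (ZMod p))
    (ι : Type) [Fintype ι] (B : Module.Basis ι (ZMod p) W)
    (hsym : ∀ m m' : Fin k → ι, Set.range m = Set.range m' →
      G (fun j => B (m j)) = G (fun j => B (m' j))) :
    ∃ N₀ : ℕ, ∀ N ≥ N₀, ∃ r : W →ₗ[ZMod p] (Fin N → ZMod p),
      ∀ w : Fin k → W, G w = ∑ n, ∏ j, r (w j) n := by
  classical
  haveI : Fact p.Prime := ⟨hp⟩
  obtain ⟨lam, hlam⟩ := stmt6_aux hk G B hsym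
  set M := Fintype.card (Finset ι × Fin p) with hM
  refine ⟨M, fun N hMN => ?_⟩
  set e := Fintype.equivFin (Finset ι × Fin p) with he
  set r : W →ₗ[ZMod p] (Fin N → ZMod p) :=
    LinearMap.pi (fun n => if h : (n : ℕ) < M then lam (e.symm ⟨n, h⟩) else 0) with hr
  refine ⟨r, fun w => ?_⟩
  have hrapp : ∀ (v : W) (n : Fin N),
      r v n = if h : (n : ℕ) < M then lam (e.symm ⟨n, h⟩) v else 0 := by
    intro v n
    rw [hr, LinearMap.pi_apply]
    by_cases h : (n : ℕ) < M
    · rw [dif_pos h, dif_pos h]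
    · rw [dif_neg h, dif_neg h, LinearMap.zero_apply]
  set emb : Finset ι × Fin p → Fin N := fun a => Fin.castLE hMN (e a) with hemb
  have hembinj : Function.Injective emb := by
    intro a b h
    apply e.injective
    exact Fin.castLE_injective hMN h
  have hg0 : ∀ n : Fin N, n ∉ Finset.univ.image emb → (∏ j, r (w j) n) = 0 := by
    intro n hn
    have hnM : ¬ ((n : ℕ) < M) := by
      intro h
      apply hn
      refine Finset.mem_image.mpr ⟨e.symm ⟨(n : ℕ), h⟩, Finset.mem_univ _, ?_⟩
      rw [hemb]
      simp only [Equiv.apply_symm_apply]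
      ext
      simp
    apply Finset.prod_eq_zero (Finset.mem_univ (⟨0, hk⟩ : Fin k))
    rw [hrapp, dif_neg hnM]
  calc G w = ∑ a : Finset ι × Fin p, ∏ j, lam a (w j) := hlam w
    _ = ∑ a : Finset ι × Fin p, ∏ j, r (w j) (emb a) := by
        apply Finset.sum_congr rfl
        intro a _
        apply Finset.prod_congr rfl
        intro j _
        rw [hrapp]
        have hlt : ((emb a : Fin N) : ℕ) < M := by
          rw [hemb]; exact (e a).isLt
        rw [dif_pos hlt]
        have hfa : (⟨((emb a : Fin N) : ℕ), hlt⟩ : Fin M) = e a := by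
          apply Fin.ext
          show ((emb a : Fin N) : ℕ) = ((e a) : ℕ)
          rw [hemb]
          simp
        have hsa : e.symm ⟨((emb a : Fin N) : ℕ), hlt⟩ = a := by
          apply e.injective
          rw [Equiv.apply_symm_apply]
          exact hfa
        rw [hsa]
    _ = ∑ n ∈ Finset.univ.image emb, ∏ j, r (w j) n := by
        rw [Finset.sum_image (fun a _ b _ h => hembinj h)]
    _ = ∑ n : Fin N, ∏ j, r (w j) n := by
        apply Finset.sum_subset (Finset.subset_univ _)
        intro n _ hn
        exact hg0 n hn
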